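/- For ℝⁿ and f ∈ W^{s,p}(ℝⁿ), a volume-preserving linear map φ ∈ SL(n) satisfies Π*_{s,p}(f ∘ φ^{-1}) = φ(Π*_{s,p} f), so that |Π*_{s,p}(f∘φ^{-1})| = |Π*_{s,p} f|; i.e., the volume of the fractional L^p polar projection body is an SL(n)-invariant of f. -/

import Mathlib

open MeasureTheory
open scoped ENNReal

/-- The `s`-fractional `L^p` polar projection body of `f`: the star-shaped set whose
gauge satisfies `‖ξ‖^{ps} = ∫_0^∞ t^{-ps-1} ∫ |f(x+tξ)-f(x)|^p dx dt`, realized as the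
set of `ξ` where this quantity is at most `1`. -/
def fracPolarProjBody (n : ℕ) (s p : ℝ) (f : EuclideanSpace ℝ (Fin n) → ℝ) :
    Set (EuclideanSpace ℝ (Fin n)) :=
  {ξ | (∫⁻ t in Set.Ioi (0 : ℝ), ENNReal.ofReal (t ^ (-(p * s) - 1)) *
      ∫⁻ x, ENNReal.ofReal (|f (x + t • ξ) - f x| ^ p)) ≤ 1}

theorem stmt_19 (n : ℕ) (s p : ℝ) (hs : s ∈ Set.Ioo (0 : ℝ) 1) (hp : 1 < p) (hpn : p < n / s)
    (f : EuclideanSpace ℝ (Fin n) → ℝ)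
    (hf : MemLp f (ENNReal.ofReal p) volume)
    (hgag : ∫⁻ x, ∫⁻ y, ENNReal.ofReal (|f x - f y| ^ p / ‖x - y‖ ^ ((n : ℝ) + p * s)) < ⊤)
    (φ : EuclideanSpace ℝ (Fin n) ≃ₗ[ℝ] EuclideanSpace ℝ (Fin n))
    (hdet : LinearMap.det (φ : EuclideanSpace ℝ (Fin n) →ₗ[ℝ] EuclideanSpace ℝ (Fin n)) = 1) :
    fracPolarProjBody n s p (f ∘ φ.symm) = φ '' fracPolarProjBody n s p f ∧
      volume (fracPolarProjBody n s p (f ∘ φ.symm)) = volume (fracPolarProjBody n s p f) := by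
  -- φ preserves Lebesgue measure since its determinant is 1
  have hmap : Measure.map (⇑φ) (volume : Measure (EuclideanSpace ℝ (Fin n))) = volume := by
    have : Measure.map (⇑(φ : EuclideanSpace ℝ (Fin n) →ₗ[ℝ] EuclideanSpace ℝ (Fin n))) (volume : Measure (EuclideanSpace ℝ (Fin n)))
        = ENNReal.ofReal
            |(LinearMap.det (φ : EuclideanSpace ℝ (Fin n) →ₗ[ℝ] EuclideanSpace ℝ (Fin n)))⁻¹| • volume :=
      Measure.map_linearMap_addHaar_eq_smul_addHaar volume (by rw [hdet]; norm_num)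
    simpa [hdet] using this
  have hemb : MeasurableEmbedding (⇑φ) :=
    φ.toContinuousLinearEquiv.toHomeomorph.measurableEmbedding
  have hmp : MeasurePreserving (⇑φ) (volume : Measure (EuclideanSpace ℝ (Fin n))) volume :=
    ⟨hemb.measurable, hmap⟩
  -- key: membership in the body of `f ∘ φ.symm` is membership of `φ.symm ξ` in the body of `f`
  have key : ∀ ξ : EuclideanSpace ℝ (Fin n), ξ ∈ fracPolarProjBody n s p (f ∘ φ.symm) ↔
      φ.symm ξ ∈ fracPolarProjBody n s p f := by
    intro ξ
    have hinner : ∀ t : ℝ,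
        (∫⁻ x, ENNReal.ofReal (|(f ∘ φ.symm) (x + t • ξ) - (f ∘ φ.symm) x| ^ p))
          = ∫⁻ x, ENNReal.ofReal (|f (x + t • φ.symm ξ) - f x| ^ p) := by
      intro t
      calc (∫⁻ x, ENNReal.ofReal (|(f ∘ φ.symm) (x + t • ξ) - (f ∘ φ.symm) x| ^ p))
          = ∫⁻ x, ENNReal.ofReal (|(f ∘ φ.symm) (φ x + t • ξ) - (f ∘ φ.symm) (φ x)| ^ p) :=
            (hmp.lintegral_comp_emb hemb
              (fun x => ENNReal.ofReal (|(f ∘ φ.symm) (x + t • ξ) - (f ∘ φ.symm) x| ^ p))).symm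
        _ = ∫⁻ x, ENNReal.ofReal (|f (x + t • φ.symm ξ) - f x| ^ p) := by
            congr 1
            funext x
            have : φ.symm (φ x + t • ξ) = x + t • φ.symm ξ := by
              simp [map_add, _root_.map_smul]
            simp [Function.comp, this]
    simp only [fracPolarProjBody, Set.mem_setOf_eq]
    refine ⟨fun h => le_trans (le_of_eq ?_) h, fun h => le_trans (le_of_eq ?_) h⟩ <;>
      exact lintegral_congr fun t => by rw [hinner t]
  have him : fracPolarProjBody n s p (f ∘ φ.symm) = φ '' fracPolarProjBody n s p f := by
    ext ξ
    rw [key ξ]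
    constructor
    · intro h
      exact ⟨φ.symm ξ, h, by simp⟩
    · rintro ⟨y, hy, rfl⟩
      simpa using hy
  refine ⟨him, ?_⟩
  rw [him]
  have := Measure.addHaar_image_linearMap volume
    (φ : EuclideanSpace ℝ (Fin n) →ₗ[ℝ] EuclideanSpace ℝ (Fin n)) (fracPolarProjBody n s p f)
  rw [hdet] at this
  simpa using this
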